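/- (Strong law of large numbers for the Kac chain) For every T ∈ ℕ, for μ_m-almost every (x,y) ∈ {0,1}^ℤ × {0,1}^ℤ, one has lim_{N→∞} m_i^N(φ^t(x,y)) = Φ_i^t(m) for all i ∈ {0,1} and all t ∈ {0,…,T}, where Φ(m) = ((1−2m₁)m₀, m₁). -/

import Mathlib

open MeasureTheory ProbabilityTheory Filter

/-- The Kac chain dynamics. -/
def kacPhi (p : (ℤ → ℤ) × (ℤ → ℤ)) : (ℤ → ℤ) × (ℤ → ℤ) :=
  (fun i => p.1 (i - 1) + p.2 (i - 1) - 2 * p.1 (i - 1) * p.2 (i - 1), p.2)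

/-- Block-averaged magnetization. -/
noncomputable def m0Avg (N : ℕ) (p : (ℤ → ℤ) × (ℤ → ℤ)) : ℝ :=
  (∑ i ∈ Finset.Icc (-(N : ℤ)) (N : ℤ), (2 * (p.1 i : ℝ) - 1)) / (2 * (N : ℝ) + 1)

/-- Block-averaged scatterer density. -/
noncomputable def m1Avg (N : ℕ) (p : (ℤ → ℤ) × (ℤ → ℤ)) : ℝ :=
  (∑ i ∈ Finset.Icc (-(N : ℤ)) (N : ℤ), (p.2 i : ℝ)) / (2 * (N : ℝ) + 1)

/-- The macroscopic law `Φ(m₀, m₁) = ((1−2m₁)m₀, m₁)`. -/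
def PhiMap (m : ℝ × ℝ) : ℝ × ℝ := ((1 - 2 * m.2) * m.1, m.2)

/-- The family of all coordinate functions (spins and scatterers). -/
def coordFun : ℤ ⊕ ℤ → ((ℤ → ℤ) × (ℤ → ℤ)) → ℤ :=
  Sum.elim (fun i p => p.1 i) (fun i p => p.2 i)



open MeasureTheory ProbabilityTheory Filter Finset

def resCount (k r n : ℕ) : ℕ := n / k + if r < n % k then 1 else 0

lemma resCount_tendsto_atTop {k : ℕ} (hk : 0 < k) (r : ℕ) :
    Tendsto (fun n => resCount k r n) atTop atTop := by
  refine tendsto_atTop_atTop.2 fun b => ⟨b * k, fun n hn => ?_⟩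
  have h1 : b * k / k ≤ n / k := Nat.div_le_div_right hn
  rw [Nat.mul_div_cancel _ hk] at h1
  exact le_trans h1 (Nat.le_add_right _ _)

lemma resCount_div_tendsto {k : ℕ} (hk : 0 < k) (r : ℕ) :
    Tendsto (fun n : ℕ => (resCount k r n : ℝ) / n) atTop (nhds (1 / k)) := by
  have hkR : (0:ℝ) < k := by exact_mod_cast hk
  have h1 : Tendsto (fun n : ℕ => 1 / (k:ℝ) - 1 / n) atTop (nhds (1 / k)) := by
    simpa using (tendsto_const_nhds (x := 1/(k:ℝ))).sub tendsto_one_div_atTop_nhds_zero_nat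
  have h2 : Tendsto (fun n : ℕ => 1 / (k:ℝ) + 1 / n) atTop (nhds (1 / k)) := by
    simpa using (tendsto_const_nhds (x := 1/(k:ℝ))).add tendsto_one_div_atTop_nhds_zero_nat
  refine tendsto_of_tendsto_of_tendsto_of_le_of_le' h1 h2 ?_ ?_
  · filter_upwards [eventually_ge_atTop 1] with n hn
    have hnR : (0:ℝ) < n := by exact_mod_cast hn
    have hqn : ((k:ℝ) * ((n/k : ℕ):ℝ) + ((n % k : ℕ):ℝ)) = n := by exact_mod_cast Nat.div_add_mod n k
    have hmR' : ((n % k : ℕ) : ℝ) < k := by exact_mod_cast Nat.mod_lt _ hk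
    have hc : (resCount k r n : ℝ) = ((n/k : ℕ):ℝ) + (if r < n % k then (1:ℝ) else 0) := by
      unfold resCount; split <;> simp
    have hite : (0:ℝ) ≤ (if r < n % k then (1:ℝ) else 0) := by split <;> norm_num
    have e1 : 1/(k:ℝ) - 1/n = ((n:ℝ)/k - 1)/n := by field_simp
    rw [e1, hc]
    gcongr ?_ / n
    rw [sub_le_iff_le_add, div_le_iff₀ hkR]
    have hmnn : (0:ℝ) ≤ ((n % k : ℕ):ℝ) := by positivity
    nlinarith [hite]
  · filter_upwards [eventually_ge_atTop 1] with n hn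
    have hnR : (0:ℝ) < n := by exact_mod_cast hn
    have hqn : ((k:ℝ) * ((n/k : ℕ):ℝ) + ((n % k : ℕ):ℝ)) = n := by exact_mod_cast Nat.div_add_mod n k
    have hc : (resCount k r n : ℝ) = ((n/k : ℕ):ℝ) + (if r < n % k then (1:ℝ) else 0) := by
      unfold resCount; split <;> simp
    have hite : (if r < n % k then (1:ℝ) else 0) ≤ 1 := by split <;> norm_num
    have e1 : 1/(k:ℝ) + 1/n = ((n:ℝ)/k + 1)/n := by field_simp
    rw [e1, hc]
    gcongr ?_ / n
    have hq : ((n/k : ℕ):ℝ) ≤ (n:ℝ)/k := by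
      rw [le_div_iff₀ hkR]
      have hmnn : (0:ℝ) ≤ ((n % k : ℕ):ℝ) := by positivity
      nlinarith
    linarith

lemma sum_range_eq_residue (k : ℕ) (hk : 0 < k) (u : ℕ → ℝ) (n : ℕ) :
    ∑ i ∈ range n, u i = ∑ r ∈ range k, ∑ m ∈ range (resCount k r n), u (r + m * k) := by
  rw [Finset.sum_sigma']
  refine Finset.sum_nbij' (i := fun i => (⟨i % k, i / k⟩ : Σ _ : ℕ, ℕ))
    (j := fun x => x.1 + x.2 * k) ?_ ?_ ?_ ?_ ?_
  · intro i hi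
    simp only [Finset.mem_range] at hi
    have e1 : k * (i / k) + i % k = i := Nat.div_add_mod i k
    have e2 : k * (n / k) + n % k = n := Nat.div_add_mod n k
    have l1 : i % k < k := Nat.mod_lt _ hk
    have hle : i / k ≤ n / k := Nat.div_le_div_right (le_of_lt hi)
    simp only [Finset.mem_sigma, Finset.mem_range]
    refine ⟨l1, ?_⟩
    show i / k < resCount k (i % k) n
    unfold resCount
    rcases lt_or_eq_of_le hle with h | h
    · split <;> omega
    · rw [h] at e1
      generalize hg : k * (n / k) = K at e1 e2
      split <;> omega
  · intro x hx
    simp only [Finset.mem_sigma, Finset.mem_range] at hx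
    obtain ⟨hr, hm⟩ := hx
    simp only [Finset.mem_range]
    show x.1 + x.2 * k < n
    unfold resCount at hm
    have e2 : k * (n / k) + n % k = n := Nat.div_add_mod n k
    have hcase : x.2 < n / k ∨ (x.2 = n / k ∧ x.1 < n % k) := by split at hm <;> omega
    rcases hcase with h | ⟨h1, h2⟩
    · calc x.1 + x.2 * k < k + x.2 * k := Nat.add_lt_add_right hr _
        _ = (x.2 + 1) * k := by ring
        _ ≤ (n / k) * k := Nat.mul_le_mul_right k h
        _ = k * (n / k) := mul_comm _ _
        _ ≤ k * (n / k) + n % k := Nat.le_add_right _ _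
        _ = n := e2
    · calc x.1 + x.2 * k < n % k + x.2 * k := Nat.add_lt_add_right h2 _
        _ = n % k + (n / k) * k := by rw [h1]
        _ = k * (n / k) + n % k := by ring
        _ = n := e2
  · intro i _
    show i % k + i / k * k = i
    exact Nat.mod_add_div' i k
  · intro x hx
    simp only [Finset.mem_sigma, Finset.mem_range] at hx
    show (⟨(x.1 + x.2 * k) % k, (x.1 + x.2 * k) / k⟩ : Σ _ : ℕ, ℕ) = x
    rw [Nat.add_mul_mod_self_right, Nat.mod_eq_of_lt hx.1, Nat.add_mul_div_right _ _ hk,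
      Nat.div_eq_of_lt hx.1, Nat.zero_add]
  · intro i _
    show u i = u (i % k + i / k * k)
    rw [Nat.mod_add_div' i k]

lemma cesaro_residue {k : ℕ} (hk : 0 < k) (u : ℕ → ℝ) (L : ℝ)
    (h : ∀ r < k, Tendsto (fun n : ℕ => (∑ m ∈ range n, u (r + m * k)) / n) atTop (nhds L)) :
    Tendsto (fun n : ℕ => (∑ i ∈ range n, u i) / n) atTop (nhds L) := by
  have hkR : (0:ℝ) < k := by exact_mod_cast hk
  have key : ∀ r ∈ range k, Tendsto
      (fun n : ℕ => (∑ m ∈ range (resCount k r n), u (r + m*k)) / n) atTop (nhds (1/k * L)) := by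
    intro r hr
    rw [Finset.mem_range] at hr
    have hA : Tendsto (fun n : ℕ =>
        (∑ m ∈ range (resCount k r n), u (r+m*k)) / (resCount k r n)) atTop (nhds L) :=
      (h r hr).comp (resCount_tendsto_atTop hk r)
    have hB := (resCount_div_tendsto hk r).mul hA
    apply hB.congr'
    filter_upwards [(resCount_tendsto_atTop hk r).eventually_ge_atTop 1,
      eventually_ge_atTop 1] with n hc hn
    have hcR : ((resCount k r n : ℕ):ℝ) ≠ 0 := by
      have : (0:ℕ) < resCount k r n := hc
      positivity
    have hnR : (n:ℝ) ≠ 0 := by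
      have : (0:ℕ) < n := hn
      positivity
    field_simp
  have htot := tendsto_finset_sum (range k) key
  have hsum : ∑ _r ∈ range k, (1/(k:ℝ) * L) = L := by
    rw [Finset.sum_const, Finset.card_range, nsmul_eq_mul]
    field_simp
  rw [hsum] at htot
  apply htot.congr
  intro n
  rw [sum_range_eq_residue k hk u n, Finset.sum_div]

lemma sum_Icc_split (v : ℤ → ℝ) (N : ℕ) :
    ∑ i ∈ Finset.Icc (-(N:ℤ)) (N:ℤ), v i
      = (∑ i ∈ range (N+1), v i) + ∑ i ∈ range N, v (-1 - i) := by
  have hsplit : Finset.Icc (-(N:ℤ)) (N:ℤ)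
      = Finset.Icc (0:ℤ) (N:ℤ) ∪ Finset.Icc (-(N:ℤ)) (-1 : ℤ) := by
    ext a; simp only [Finset.mem_Icc, Finset.mem_union]; omega
  have hdisj : Disjoint (Finset.Icc (0:ℤ) (N:ℤ)) (Finset.Icc (-(N:ℤ)) (-1:ℤ)) := by
    rw [Finset.disjoint_left]
    intro a ha hb
    rw [Finset.mem_Icc] at ha hb
    omega
  rw [hsplit, Finset.sum_union hdisj]
  congr 1
  · refine Finset.sum_nbij' (i := fun a => a.toNat) (j := fun m => (m:ℤ)) ?_ ?_ ?_ ?_ ?_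
    · intro a ha; simp only [Finset.mem_Icc] at ha; simp only [Finset.mem_range]; omega
    · intro m hm; simp only [Finset.mem_range] at hm; simp only [Finset.mem_Icc]; omega
    · intro a ha; simp only [Finset.mem_Icc] at ha; show ((a.toNat : ℤ)) = a; omega
    · intro m _; show ((m:ℤ)).toNat = m; omega
    · intro a ha; simp only [Finset.mem_Icc] at ha
      show v a = v ((a.toNat : ℤ))
      congr 1; omega
  · refine Finset.sum_nbij' (i := fun a => (-1 - a).toNat) (j := fun m => (-1 - (m:ℤ))) ?_ ?_ ?_ ?_ ?_
    · intro a ha; simp only [Finset.mem_Icc] at ha; simp only [Finset.mem_range]; omega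
    · intro m hm; simp only [Finset.mem_range] at hm; simp only [Finset.mem_Icc]; omega
    · intro a ha; simp only [Finset.mem_Icc] at ha; show (-1 - (((-1 - a).toNat : ℤ))) = a; omega
    · intro m _; show (-1 - (-1 - (m:ℤ))).toNat = m; omega
    · intro a ha; simp only [Finset.mem_Icc] at ha
      show v a = v (-1 - (((-1 - a).toNat : ℤ)))
      congr 1; omega

lemma icc_avg_of_two_sided (v : ℤ → ℝ) (L : ℝ)
    (h1 : Tendsto (fun n : ℕ => (∑ i ∈ range n, v i) / n) atTop (nhds L))
    (h2 : Tendsto (fun n : ℕ => (∑ i ∈ range n, v (-1 - i)) / n) atTop (nhds L)) :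
    Tendsto (fun N : ℕ => (∑ i ∈ Finset.Icc (-(N:ℤ)) (N:ℤ), v i) / (2*(N:ℝ)+1))
      atTop (nhds L) := by
  have hinv : Tendsto (fun N : ℕ => 1/(N:ℝ)) atTop (nhds 0) := tendsto_one_div_atTop_nhds_zero_nat
  have hw1 : Tendsto (fun N : ℕ => ((N:ℝ)+1)/(2*(N:ℝ)+1)) atTop (nhds (1/2)) := by
    have : Tendsto (fun N : ℕ => (1 + 1/(N:ℝ))/(2 + 1/(N:ℝ))) atTop (nhds ((1+0)/(2+0))) := by
      apply Tendsto.div ((tendsto_const_nhds (x := (1:ℝ))).add hinv)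
        ((tendsto_const_nhds (x := (2:ℝ))).add hinv)
      norm_num
    norm_num at this
    apply this.congr'
    filter_upwards [eventually_ge_atTop 1] with N hN
    have hNR : (N:ℝ) ≠ 0 := by
      have : (0:ℕ) < N := hN
      positivity
    field_simp
  have hw2 : Tendsto (fun N : ℕ => (N:ℝ)/(2*(N:ℝ)+1)) atTop (nhds (1/2)) := by
    have : Tendsto (fun N : ℕ => 1/(2 + 1/(N:ℝ))) atTop (nhds (1/(2+0))) := by
      apply Tendsto.div tendsto_const_nhds ((tendsto_const_nhds (x := (2:ℝ))).add hinv)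
      norm_num
    norm_num at this
    apply this.congr'
    filter_upwards [eventually_ge_atTop 1] with N hN
    have hNR : (N:ℝ) ≠ 0 := by
      have : (0:ℕ) < N := hN
      positivity
    field_simp
  have h1' : Tendsto (fun N : ℕ => (∑ i ∈ range (N+1), v i) / ((N:ℝ)+1)) atTop (nhds L) := by
    have := h1.comp (tendsto_add_atTop_nat 1)
    apply this.congr
    intro n
    simp [Function.comp]
  have hcomb := (hw1.mul h1').add (hw2.mul h2)
  rw [show 1/2*L + 1/2*L = L by ring] at hcomb
  apply hcomb.congr'
  filter_upwards [eventually_ge_atTop 1] with N hN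
  have hNR : (0:ℝ) < N := by exact_mod_cast hN
  have hN1 : ((N:ℝ)+1) ≠ 0 := by positivity
  have h2N : (2*(N:ℝ)+1) ≠ 0 := by positivity
  rw [sum_Icc_split]
  field_simp


lemma slln_stationary {Ω : Type*} [MeasurableSpace Ω] (μ : Measure Ω) [IsProbabilityMeasure μ]
    (k : ℕ) (hk : 0 < k) (V : ℤ → Ω → ℝ)
    (hint : ∀ i, Integrable (V i) μ)
    (hindep : ∀ i j : ℤ, (k:ℤ) ≤ |i - j| → IndepFun (V i) (V j) μ)
    (hident : ∀ i, IdentDistrib (V i) (V 0) μ μ) :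
    ∀ᵐ p ∂μ, Tendsto (fun N : ℕ => (∑ i ∈ Finset.Icc (-(N:ℤ)) (N:ℤ), V i p) / (2*(N:ℝ)+1))
      atTop (nhds (∫ x, V 0 x ∂μ)) := by
  set L := ∫ x, V 0 x ∂μ with hL
  -- strong law for each residue class, on both sides
  have hclass : ∀ (g : ℕ → ℤ), (∀ n m : ℕ, n ≠ m → (k:ℤ) ≤ |g n - g m|) →
      ∀ᵐ p ∂μ, Tendsto (fun n : ℕ => (∑ m ∈ range n, V (g m) p) / n) atTop (nhds L) := by
    intro g hg
    have h1 : Integrable (V (g 0)) μ := hint _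
    have h2 : Pairwise (Function.onFun (IndepFun · · μ) fun n => V (g n)) :=
      fun n m hnm => hindep _ _ (hg n m hnm)
    have h3 : ∀ n, IdentDistrib (V (g n)) (V (g 0)) μ μ :=
      fun n => (hident (g n)).trans (hident (g 0)).symm
    have := strong_law_ae_real (fun n => V (g n)) h1 h2 h3
    rwa [(hident (g 0)).integral_eq] at this
  have hmain : ∀ᵐ p ∂μ, ∀ r : ℕ, r < k →
      (Tendsto (fun n : ℕ => (∑ m ∈ range n, V ((r:ℤ) + (m:ℤ) * (k:ℤ)) p) / n) atTop (nhds L) ∧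
       Tendsto (fun n : ℕ => (∑ m ∈ range n, V (-1 - ((r:ℤ) + (m:ℤ) * (k:ℤ))) p) / n) atTop (nhds L)) := by
    rw [ae_all_iff]
    intro r
    by_cases hr : r < k
    · have A := hclass (fun m => (r:ℤ) + (m:ℤ) * (k:ℤ)) (by
        intro n m hnm
        have : ((r:ℤ) + (n:ℤ)*(k:ℤ)) - ((r:ℤ) + (m:ℤ)*(k:ℤ)) = ((n:ℤ) - m) * k := by ring
        rw [this, abs_mul]
        have h1 : (1:ℤ) ≤ |(n:ℤ) - m| := Int.one_le_abs (by omega)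
        have h2 : |(k:ℤ)| = k := abs_of_nonneg (by positivity)
        nlinarith [abs_nonneg ((n:ℤ) - m)])
      have B := hclass (fun m => -1 - ((r:ℤ) + (m:ℤ) * (k:ℤ))) (by
        intro n m hnm
        have : (-1 - ((r:ℤ) + (n:ℤ)*(k:ℤ))) - (-1 - ((r:ℤ) + (m:ℤ)*(k:ℤ))) = ((m:ℤ) - n) * k := by ring
        rw [this, abs_mul]
        have h1 : (1:ℤ) ≤ |(m:ℤ) - n| := Int.one_le_abs (by omega)
        have h2 : |(k:ℤ)| = k := abs_of_nonneg (by positivity)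
        nlinarith [abs_nonneg ((m:ℤ) - n)])
      filter_upwards [A, B] with p hA hB
      exact fun _ => ⟨hA, hB⟩
    · exact Eventually.of_forall (fun p h => absurd h hr)
  filter_upwards [hmain] with p hp
  apply icc_avg_of_two_sided (fun i => V i p) L
  · apply cesaro_residue hk (fun i => V (i:ℤ) p) L
    intro r hr
    have := (hp r hr).1
    apply this.congr
    intro n
    have harg : ∀ m : ℕ, (((r + m*k : ℕ)) : ℤ) = (r:ℤ) + (m:ℤ)*(k:ℤ) := fun m => by push_cast; ring
    simp only [harg]
  · apply cesaro_residue hk (fun i => V (-1 - (i:ℤ)) p) L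
    intro r hr
    have := (hp r hr).2
    apply this.congr
    intro n
    have harg : ∀ m : ℕ, (((r + m*k : ℕ)) : ℤ) = (r:ℤ) + (m:ℤ)*(k:ℤ) := fun m => by push_cast; ring
    simp only [harg]

noncomputable def Zfun (t : ℕ) (i : ℤ) (p : (ℤ → ℤ) × (ℤ → ℤ)) : ℝ :=
  (2 * (p.1 (i - (t:ℤ)) : ℝ) - 1) * ∏ j ∈ Finset.Ico (i - (t:ℤ)) i, (1 - 2 * (p.2 j : ℝ))

lemma kacPhi_iterate_snd (t : ℕ) (p : (ℤ → ℤ) × (ℤ → ℤ)) : (kacPhi^[t] p).2 = p.2 := by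
  induction t with
  | zero => rfl
  | succ t ih => rw [Function.iterate_succ_apply', kacPhi, ih]

lemma Ico_succ_insert (a b : ℤ) (h : a ≤ b) :
    Finset.Ico a (b+1) = insert b (Finset.Ico a b) := by
  ext x; simp only [Finset.mem_Ico, Finset.mem_insert]; omega

lemma kacPhi_formula (t : ℕ) (i : ℤ) (p : (ℤ → ℤ) × (ℤ → ℤ)) :
    2 * (((kacPhi^[t] p).1 i : ℤ) : ℝ) - 1 = Zfun t i p := by
  induction t generalizing i with
  | zero =>
    simp only [Function.iterate_zero, id_eq, Zfun]
    norm_num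
  | succ t ih =>
    rw [Function.iterate_succ_apply']
    have hq2 : (kacPhi^[t] p).2 = p.2 := kacPhi_iterate_snd t p
    have hstep : 2 * (((kacPhi (kacPhi^[t] p)).1 i : ℤ) : ℝ) - 1
        = (2 * (((kacPhi^[t] p).1 (i-1) : ℤ) : ℝ) - 1) * (1 - 2 * ((p.2 (i-1) : ℤ) : ℝ)) := by
      simp only [kacPhi, hq2]
      push_cast
      ring
    rw [hstep, ih (i-1)]
    unfold Zfun
    have harg : i - 1 - (t:ℤ) = i - ((t:ℕ)+1 : ℕ) := by push_cast; ring
    have hIco : Finset.Ico (i - ((t:ℕ)+1 : ℕ) : ℤ) i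
        = insert (i-1) (Finset.Ico (i - ((t:ℕ)+1 : ℕ) : ℤ) (i-1)) := by
      have : i = (i-1) + 1 := by ring
      rw [this]
      rw [Ico_succ_insert _ _ (by push_cast; omega)]
      norm_num
    rw [hIco, Finset.prod_insert (by simp), harg]
    ring

lemma PhiMap_iterate (m₀ m₁ : ℝ) (t : ℕ) :
    PhiMap^[t] (m₀, m₁) = (m₀ * (1 - 2*m₁)^t, m₁) := by
  induction t with
  | zero => simp
  | succ t ih =>
    rw [Function.iterate_succ_apply', ih, PhiMap]
    simp only [Prod.mk.injEq]
    constructor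
    · ring
    · trivial

lemma Ico_eq_image (t : ℕ) (i : ℤ) :
    Finset.Ico (i - (t:ℤ)) i = (range t).image (fun m : ℕ => i - (t:ℤ) + m) := by
  ext a
  simp only [Finset.mem_Ico, Finset.mem_image, Finset.mem_range]
  constructor
  · intro h
    exact ⟨(a - (i - t)).toNat, by omega, by omega⟩
  · rintro ⟨m, hm, rfl⟩
    omega

noncomputable section KacAux
open MeasureTheory ProbabilityTheory Filter Finset

abbrev KacOmega := (ℤ → ℤ) × (ℤ → ℤ)

lemma coordFun_measurable (s : ℤ ⊕ ℤ) : Measurable (coordFun s) := by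
  cases s with
  | inl i => exact (measurable_pi_apply i).comp measurable_fst
  | inr i => exact (measurable_pi_apply i).comp measurable_snd

/-- The window of coordinates on which `Zfun t i` depends. -/
def winSet (t : ℕ) (i : ℤ) : Finset (ℤ ⊕ ℤ) :=
  insert (Sum.inl (i - (t:ℤ))) ((Finset.Ico (i - (t:ℤ)) i).image Sum.inr)

def winMap (t : ℕ) (i : ℤ) (p : KacOmega) : ℤ × (Fin t → ℤ) :=
  (p.1 (i - (t:ℤ)), fun j => p.2 (i - (t:ℤ) + (j:ℕ)))

def winF (t : ℕ) (q : ℤ × (Fin t → ℤ)) : ℝ :=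
  (2 * (q.1 : ℝ) - 1) * ∏ j : Fin t, (1 - 2 * (q.2 j : ℝ))

lemma winMap_measurable (t : ℕ) (i : ℤ) : Measurable (winMap t i) := by
  unfold winMap
  exact Measurable.prod measurable_fst.eval
    (measurable_pi_lambda _ fun j => measurable_snd.eval)

lemma prod_Ico_eq_prod_fin (t : ℕ) (i : ℤ) (f : ℤ → ℝ) :
    ∏ j ∈ Finset.Ico (i - (t:ℤ)) i, f j = ∏ j : Fin t, f (i - (t:ℤ) + (j:ℕ)) := by
  rw [Ico_eq_image t i]
  rw [Finset.prod_image ?hinj]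
  case hinj => intro a _ b _ h; simp only [add_right_inj, Nat.cast_inj] at h; omega
  exact (Fin.prod_univ_eq_prod_range (fun m => f (i - (t:ℤ) + m)) t).symm

lemma Zfun_eq_winF (t : ℕ) (i : ℤ) : Zfun t i = fun p => winF t (winMap t i p) := by
  funext p
  unfold Zfun winF winMap
  rw [prod_Ico_eq_prod_fin]

lemma Zfun_measurable (t : ℕ) (i : ℤ) : Measurable (Zfun t i) := by
  rw [Zfun_eq_winF]
  exact (Measurable.of_discrete (f := winF t)).comp (winMap_measurable t i)

lemma inr_mem_winSet (t : ℕ) (i : ℤ) (j : Fin t) :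
    Sum.inr (i - (t:ℤ) + (j:ℕ)) ∈ winSet t i := by
  apply Finset.mem_insert_of_mem
  apply Finset.mem_image_of_mem
  rw [Finset.mem_Ico]
  have := j.2
  omega

section Meas
variable {μ : Measure KacOmega} [IsProbabilityMeasure μ]

/-- Generic marginal description for a {0,1}-valued random variable. -/
lemma marg_gen {X : KacOmega → ℤ} (hX : Measurable X) {u v : ℝ}
    (hu : 0 ≤ u) (hv : 0 ≤ v) (huv : u + v = 1)
    (h1 : μ {p | X p = 1} = ENNReal.ofReal u) (h0 : μ {p | X p = 0} = ENNReal.ofReal v) :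
    (∀ a : ℤ, a ≠ 1 → a ≠ 0 → μ {p | X p = a} = 0)
      ∧ μ ({p | X p = 1} ∪ {p | X p = 0})ᶜ = 0 := by
  have hm1 : MeasurableSet {p | X p = 1} := hX (MeasurableSet.singleton 1)
  have hm0 : MeasurableSet {p | X p = 0} := hX (MeasurableSet.singleton 0)
  have hdisj : Disjoint {p | X p = 1} {p | X p = 0} := by
    rw [Set.disjoint_left]
    rintro p hp1 hp0
    simp only [Set.mem_setOf_eq] at hp1 hp0
    omega
  have hunion : μ ({p | X p = 1} ∪ {p | X p = 0}) = 1 := by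
    rw [measure_union hdisj hm0, h1, h0, ← ENNReal.ofReal_add hu hv, huv, ENNReal.ofReal_one]
  have hcompl : μ ({p | X p = 1} ∪ {p | X p = 0})ᶜ = 0 := by
    rw [measure_compl (hm1.union hm0) (measure_ne_top _ _), hunion, measure_univ, tsub_self]
  refine ⟨fun a ha1 ha0 => ?_, hcompl⟩
  apply measure_mono_null _ hcompl
  intro p hp
  simp only [Set.mem_setOf_eq] at hp
  simp only [Set.mem_compl_iff, Set.mem_union, Set.mem_setOf_eq]
  rw [hp]
  push_neg
  exact ⟨ha1, ha0⟩

variable {m₀ m₁ : ℝ}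

/-- marginal law of a spin coordinate -/
def nuX (m₀ : ℝ) : ℤ → ENNReal := fun a =>
  if a = 1 then ENNReal.ofReal ((1 + m₀)/2) else if a = 0 then ENNReal.ofReal ((1 - m₀)/2) else 0

/-- marginal law of a scatterer coordinate -/
def nuY (m₁ : ℝ) : ℤ → ENNReal := fun a =>
  if a = 1 then ENNReal.ofReal m₁ else if a = 0 then ENNReal.ofReal (1 - m₁) else 0

lemma marg_x (hm₀ : m₀ ∈ Set.Icc (-1:ℝ) 1)
    (hx1 : ∀ i : ℤ, μ {p | p.1 i = 1} = ENNReal.ofReal ((1 + m₀) / 2))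
    (hx0 : ∀ i : ℤ, μ {p | p.1 i = 0} = ENNReal.ofReal ((1 - m₀) / 2))
    (i : ℤ) (a : ℤ) : μ {p | p.1 i = a} = nuX m₀ a := by
  have h := marg_gen (X := fun p : KacOmega => p.1 i)
    ((measurable_pi_apply i).comp measurable_fst)
    (by linarith [hm₀.1] : (0:ℝ) ≤ (1+m₀)/2) (by linarith [hm₀.2] : (0:ℝ) ≤ (1-m₀)/2)
    (by ring) (hx1 i) (hx0 i)
  unfold nuX
  split
  · next ha => rw [ha]; exact hx1 i
  · split
    · next ha1 ha => rw [ha]; exact hx0 i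
    · next ha1 ha0 => exact h.1 a ha1 ha0

lemma marg_y (hm₁ : m₁ ∈ Set.Icc (0:ℝ) 1)
    (hy1 : ∀ i : ℤ, μ {p | p.2 i = 1} = ENNReal.ofReal m₁)
    (hy0 : ∀ i : ℤ, μ {p | p.2 i = 0} = ENNReal.ofReal (1 - m₁))
    (i : ℤ) (a : ℤ) : μ {p | p.2 i = a} = nuY m₁ a := by
  have h := marg_gen (X := fun p : KacOmega => p.2 i)
    ((measurable_pi_apply i).comp measurable_snd)
    hm₁.1 (by linarith [hm₁.2] : (0:ℝ) ≤ 1 - m₁) (by ring) (hy1 i) (hy0 i)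
  unfold nuY
  split
  · next ha => rw [ha]; exact hy1 i
  · split
    · next ha1 ha => rw [ha]; exact hy0 i
    · next ha1 ha0 => exact h.1 a ha1 ha0
end Meas
end KacAux

noncomputable section KacAux2
open MeasureTheory ProbabilityTheory Filter Finset

lemma prod_Ico_eq_prod_fin' {M : Type*} [CommMonoid M] (t : ℕ) (i : ℤ) (f : ℤ → M) :
    ∏ j ∈ Finset.Ico (i - (t:ℤ)) i, f j = ∏ j : Fin t, f (i - (t:ℤ) + (j:ℕ)) := by
  rw [Ico_eq_image t i]
  rw [Finset.prod_image ?hinj]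
  case hinj => intro a _ b _ h; simp only [add_right_inj, Nat.cast_inj] at h; omega
  exact (Fin.prod_univ_eq_prod_range (fun m => f (i - (t:ℤ) + m)) t).symm

/-- Extension of a window configuration to a function on `ℤ`. -/
def winExt (t : ℕ) (i : ℤ) (b : Fin t → ℤ) : ℤ → ℤ := fun z =>
  if h : 0 ≤ z - (i - (t:ℤ)) ∧ (z - (i - (t:ℤ))).toNat < t then b ⟨(z - (i - (t:ℤ))).toNat, h.2⟩
  else 0

lemma winExt_apply (t : ℕ) (i : ℤ) (b : Fin t → ℤ) (j : Fin t) :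
    winExt t i b (i - (t:ℤ) + (j:ℕ)) = b j := by
  unfold winExt
  rw [dif_pos ⟨by omega, by have := j.2; omega⟩]
  congr 1
  apply Fin.ext
  simp only []
  omega

lemma winMap_preimage_singleton (t : ℕ) (i : ℤ) (a : ℤ) (b : Fin t → ℤ) :
    winMap t i ⁻¹' {(a, b)}
      = ⋂ s ∈ winSet t i, coordFun s ⁻¹'
          (Sum.elim (fun _ => ({a} : Set ℤ)) (fun z => {winExt t i b z}) s) := by
  ext p
  simp only [Set.mem_preimage, Set.mem_singleton_iff, winMap, Prod.mk.injEq, Set.mem_iInter,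
    funext_iff]
  constructor
  · rintro ⟨h1, h2⟩ s hs
    unfold winSet at hs
    rcases Finset.mem_insert.1 hs with rfl | hs'
    · simpa [coordFun] using h1
    · rcases Finset.mem_image.1 hs' with ⟨z, hz, rfl⟩
      rw [Finset.mem_Ico] at hz
      have hjlt : (z - (i - (t:ℤ))).toNat < t := by omega
      have hb := h2 ⟨(z - (i - (t:ℤ))).toNat, hjlt⟩
      have hw := winExt_apply t i b ⟨(z - (i - (t:ℤ))).toNat, hjlt⟩
      simp only [Sum.elim_inr, Set.mem_preimage, Set.mem_singleton_iff]
      show p.2 z = winExt t i b z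
      have hz' : i - (t:ℤ) + (((z - (i - (t:ℤ))).toNat : ℕ) : ℤ) = z := by omega
      rw [← hz']
      exact hb.trans hw.symm
  · intro h
    constructor
    · have := h (Sum.inl (i - (t:ℤ))) (Finset.mem_insert_self _ _)
      simpa [coordFun] using this
    · intro j
      have := h (Sum.inr (i - (t:ℤ) + (j:ℕ))) (inr_mem_winSet t i j)
      simp only [Sum.elim_inr, Set.mem_preimage, Set.mem_singleton_iff] at this
      rw [show coordFun (Sum.inr (i - (t:ℤ) + (j:ℕ))) p = p.2 (i - (t:ℤ) + (j:ℕ)) from rfl] at this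
      rw [this, winExt_apply]

section Meas2
variable {μ : Measure ((ℤ → ℤ) × (ℤ → ℤ))} [IsProbabilityMeasure μ] {m₀ m₁ : ℝ}

lemma winMap_singleton
    (hind : iIndepFun (m := fun _ : ℤ ⊕ ℤ => (inferInstance : MeasurableSpace ℤ)) coordFun μ)
    (hmx : ∀ i a : ℤ, μ {p | p.1 i = a} = nuX m₀ a)
    (hmy : ∀ i a : ℤ, μ {p | p.2 i = a} = nuY m₁ a)
    (t : ℕ) (i : ℤ) (a : ℤ) (b : Fin t → ℤ) :
    μ (winMap t i ⁻¹' {(a, b)}) = nuX m₀ a * ∏ j : Fin t, nuY m₁ (b j) := by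
  rw [winMap_preimage_singleton]
  rw [hind.measure_inter_preimage_eq_mul (winSet t i)
    (sets := Sum.elim (fun _ => ({a} : Set ℤ)) (fun z => {winExt t i b z}))
    (fun s _ => MeasurableSet.of_discrete)]
  unfold winSet
  rw [Finset.prod_insert (by simp)]
  rw [Finset.prod_image ?hinj]
  case hinj => intro x _ y _ h; exact Sum.inr.inj h
  have h1 : μ (coordFun (Sum.inl (i - (t:ℤ))) ⁻¹' Sum.elim (fun _ => ({a} : Set ℤ))
      (fun z => {winExt t i b z}) (Sum.inl (i - (t:ℤ)))) = nuX m₀ a := by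
    rw [show coordFun (Sum.inl (i - (t:ℤ))) ⁻¹' Sum.elim (fun _ => ({a} : Set ℤ))
      (fun z => {winExt t i b z}) (Sum.inl (i - (t:ℤ))) = {p | p.1 (i - (t:ℤ)) = a} from rfl]
    exact hmx _ _
  rw [h1]
  congr 1
  have h2 : ∀ z : ℤ, μ (coordFun ((Sum.inr z : ℤ ⊕ ℤ)) ⁻¹' Sum.elim (fun _ => ({a} : Set ℤ))
      (fun w => {winExt t i b w}) ((Sum.inr z : ℤ ⊕ ℤ))) = nuY m₁ (winExt t i b z) := by
    intro z
    rw [show coordFun ((Sum.inr z : ℤ ⊕ ℤ)) ⁻¹' Sum.elim (fun _ => ({a} : Set ℤ))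
      (fun w => {winExt t i b w}) ((Sum.inr z : ℤ ⊕ ℤ)) = {p | p.2 z = winExt t i b z} from rfl]
    exact hmy _ _
  calc ∏ z ∈ Finset.Ico (i - (t:ℤ)) i, μ (coordFun (Sum.inr z) ⁻¹'
        Sum.elim (fun _ => ({a} : Set ℤ)) (fun w => {winExt t i b w}) (Sum.inr z))
      = ∏ z ∈ Finset.Ico (i - (t:ℤ)) i, nuY m₁ (winExt t i b z) := by
        exact Finset.prod_congr rfl (fun z _ => h2 z)
    _ = ∏ j : Fin t, nuY m₁ (winExt t i b (i - (t:ℤ) + (j:ℕ))) :=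
        prod_Ico_eq_prod_fin' t i _
    _ = ∏ j : Fin t, nuY m₁ (b j) := by
        exact Finset.prod_congr rfl (fun j _ => by rw [winExt_apply])

lemma ident_winMap
    (hind : iIndepFun (m := fun _ : ℤ ⊕ ℤ => (inferInstance : MeasurableSpace ℤ)) coordFun μ)
    (hmx : ∀ i a : ℤ, μ {p | p.1 i = a} = nuX m₀ a)
    (hmy : ∀ i a : ℤ, μ {p | p.2 i = a} = nuY m₁ a)
    (t : ℕ) (i : ℤ) : IdentDistrib (winMap t i) (winMap t 0) μ μ := by
  refine ⟨(winMap_measurable t i).aemeasurable, (winMap_measurable t 0).aemeasurable, ?_⟩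
  apply Measure.ext_of_singleton
  rintro ⟨a, b⟩
  rw [Measure.map_apply (winMap_measurable t i) (MeasurableSet.singleton _),
    Measure.map_apply (winMap_measurable t 0) (MeasurableSet.singleton _),
    winMap_singleton hind hmx hmy t i a b, winMap_singleton hind hmx hmy t 0 a b]

lemma ident_Z
    (hind : iIndepFun (m := fun _ : ℤ ⊕ ℤ => (inferInstance : MeasurableSpace ℤ)) coordFun μ)
    (hmx : ∀ i a : ℤ, μ {p | p.1 i = a} = nuX m₀ a)
    (hmy : ∀ i a : ℤ, μ {p | p.2 i = a} = nuY m₁ a)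
    (t : ℕ) (i : ℤ) : IdentDistrib (Zfun t i) (Zfun t 0) μ μ := by
  rw [Zfun_eq_winF t i, Zfun_eq_winF t 0]
  exact (ident_winMap hind hmx hmy t i).comp (Measurable.of_discrete (f := winF t))
end Meas2
end KacAux2

noncomputable section KacAux3
open MeasureTheory ProbabilityTheory Filter Finset

def winRead (t : ℕ) (i : ℤ) (f : {s // s ∈ winSet t i} → ℤ) : ℝ :=
  (2 * ((f ⟨Sum.inl (i - (t:ℤ)), Finset.mem_insert_self _ _⟩ : ℤ) : ℝ) - 1) *
    ∏ j : Fin t, (1 - 2 * ((f ⟨Sum.inr (i - (t:ℤ) + (j:ℕ)), inr_mem_winSet t i j⟩ : ℤ) : ℝ))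

lemma Zfun_eq_winRead (t : ℕ) (i : ℤ) :
    Zfun t i = fun p => winRead t i (fun s => coordFun s p) := by
  rw [Zfun_eq_winF]
  rfl

def Yfun (z : ℤ) (p : (ℤ → ℤ) × (ℤ → ℤ)) : ℝ := (p.2 z : ℝ)

lemma Yfun_measurable (z : ℤ) : Measurable (Yfun z) :=
  (Measurable.of_discrete (f := fun x : ℤ => (x:ℝ))).comp measurable_snd.eval

lemma winSet_disjoint (t : ℕ) {i i' : ℤ} (h : (t:ℤ) + 1 ≤ |i - i'|) :
    Disjoint (winSet t i) (winSet t i') := by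
  have h' : (t:ℤ) + 1 ≤ i - i' ∨ (t:ℤ) + 1 ≤ i' - i := by
    rcases abs_cases (i - i') with ⟨he, _⟩ | ⟨he, _⟩
    · left; omega
    · right; omega
  rw [Finset.disjoint_left]
  intro s hs hs'
  have key : ∀ (i₀ : ℤ), s ∈ winSet t i₀ →
      (∃ z, s = Sum.inl z ∧ z = i₀ - (t:ℤ)) ∨
      (∃ z, s = Sum.inr z ∧ i₀ - (t:ℤ) ≤ z ∧ z < i₀) := by
    intro i₀ hmem
    rcases Finset.mem_insert.1 hmem with h1 | h1
    · exact Or.inl ⟨i₀ - (t:ℤ), h1, rfl⟩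
    · rcases Finset.mem_image.1 h1 with ⟨z, hz, rfl⟩
      rw [Finset.mem_Ico] at hz
      exact Or.inr ⟨z, rfl, hz.1, hz.2⟩
  rcases key i hs with ⟨z, rfl, hz⟩ | ⟨z, rfl, hz1, hz2⟩ <;>
    rcases key i' hs' with ⟨w, hw, hw2⟩ | ⟨w, hw, hw1, hw2⟩
  · have : z = w := Sum.inl.inj hw
    omega
  · exact absurd hw Sum.inl_ne_inr
  · exact absurd hw Sum.inr_ne_inl
  · have : z = w := Sum.inr.inj hw
    omega

lemma winSet_not_mem_inr (t : ℕ) {i z : ℤ} (hz : i ≤ z) : (Sum.inr z : ℤ ⊕ ℤ) ∉ winSet t i := by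
  intro hmem
  rcases Finset.mem_insert.1 hmem with h1 | h1
  · exact absurd h1 Sum.inr_ne_inl
  · rcases Finset.mem_image.1 h1 with ⟨w, hw, hww⟩
    rw [Finset.mem_Ico] at hw
    have : w = z := Sum.inr.inj hww
    omega

section Meas3
variable {μ : Measure ((ℤ → ℤ) × (ℤ → ℤ))} [IsProbabilityMeasure μ] {m₀ m₁ : ℝ}
variable (hind : iIndepFun (m := fun _ : ℤ ⊕ ℤ => (inferInstance : MeasurableSpace ℤ)) coordFun μ)

include hind in
lemma indep_Z (t : ℕ) {i i' : ℤ} (h : (t:ℤ) + 1 ≤ |i - i'|) :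
    IndepFun (Zfun t i) (Zfun t i') μ := by
  have base := hind.indepFun_finset (winSet t i) (winSet t i') (winSet_disjoint t h)
    coordFun_measurable
  have hcomp := base.comp (φ := winRead t i) (ψ := winRead t i')
    Measurable.of_discrete Measurable.of_discrete
  rw [Zfun_eq_winRead t i, Zfun_eq_winRead t i']
  exact hcomp

include hind in
lemma indep_Z_Y (t : ℕ) {i z : ℤ} (hz : i ≤ z) : IndepFun (Zfun t i) (Yfun z) μ := by
  have hdisj : Disjoint (winSet t i) ({Sum.inr z} : Finset (ℤ ⊕ ℤ)) :=
    Finset.disjoint_singleton_right.2 (winSet_not_mem_inr t hz)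
  have base := hind.indepFun_finset (winSet t i) {Sum.inr z} hdisj coordFun_measurable
  have hcomp := base.comp (φ := winRead t i)
    (ψ := fun f : {s // s ∈ ({Sum.inr z} : Finset (ℤ ⊕ ℤ))} → ℤ =>
      ((f ⟨Sum.inr z, Finset.mem_singleton_self _⟩ : ℤ) : ℝ))
    Measurable.of_discrete Measurable.of_discrete
  rw [Zfun_eq_winRead t i]
  exact hcomp

include hind in
lemma indep_Y {z z' : ℤ} (h : z ≠ z') : IndepFun (Yfun z) (Yfun z') μ := by
  have : (Sum.inr z : ℤ ⊕ ℤ) ≠ Sum.inr z' := fun hc => h (Sum.inr.inj hc)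
  exact (hind.indepFun this).comp (Measurable.of_discrete (f := fun x : ℤ => (x:ℝ)))
    (Measurable.of_discrete (f := fun x : ℤ => (x:ℝ)))

lemma ident_Y
    (hmy : ∀ i a : ℤ, μ {p | p.2 i = a} = nuY m₁ a)
    (z : ℤ) : IdentDistrib (Yfun z) (Yfun 0) μ μ := by
  have hc : ∀ w : ℤ, Measurable (fun p : (ℤ → ℤ) × (ℤ → ℤ) => p.2 w) := fun w =>
    measurable_snd.eval
  have hident : IdentDistrib (fun p : (ℤ → ℤ) × (ℤ → ℤ) => p.2 z)
      (fun p : (ℤ → ℤ) × (ℤ → ℤ) => p.2 0) μ μ := by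
    refine ⟨(hc z).aemeasurable, (hc 0).aemeasurable, ?_⟩
    apply Measure.ext_of_singleton
    intro a
    rw [Measure.map_apply (hc z) (MeasurableSet.singleton _),
      Measure.map_apply (hc 0) (MeasurableSet.singleton _)]
    rw [show (fun p : (ℤ → ℤ) × (ℤ → ℤ) => p.2 z) ⁻¹' {a} = {p | p.2 z = a} from rfl,
      show (fun p : (ℤ → ℤ) × (ℤ → ℤ) => p.2 0) ⁻¹' {a} = {p | p.2 0 = a} from rfl,
      hmy z a, hmy 0 a]
  exact hident.comp (Measurable.of_discrete (f := fun x : ℤ => (x:ℝ)))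

/-- a.e. every coordinate is 0 or 1 -/
lemma ae_coords01
    (hmx : ∀ i a : ℤ, μ {p | p.1 i = a} = nuX m₀ a)
    (hmy : ∀ i a : ℤ, μ {p | p.2 i = a} = nuY m₁ a)
    (hm₀ : m₀ ∈ Set.Icc (-1:ℝ) 1) (hm₁ : m₁ ∈ Set.Icc (0:ℝ) 1) :
    ∀ᵐ p ∂μ, ∀ i : ℤ, (p.1 i = 0 ∨ p.1 i = 1) ∧ (p.2 i = 0 ∨ p.2 i = 1) := by
  rw [ae_all_iff]
  intro i
  have hx : μ {p : (ℤ → ℤ) × (ℤ → ℤ) | ¬ (p.1 i = 0 ∨ p.1 i = 1)} = 0 := by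
    have hsub : {p : (ℤ → ℤ) × (ℤ → ℤ) | ¬ (p.1 i = 0 ∨ p.1 i = 1)}
        ⊆ ({p | p.1 i = 1} ∪ {p | p.1 i = 0})ᶜ := by
      intro p hp
      simp only [Set.mem_setOf_eq, not_or] at hp
      simp only [Set.mem_compl_iff, Set.mem_union, Set.mem_setOf_eq, not_or]
      exact ⟨hp.2, hp.1⟩
    apply measure_mono_null hsub
    have h := marg_gen (μ := μ) (X := fun p : (ℤ → ℤ) × (ℤ → ℤ) => p.1 i)
      measurable_fst.eval
      (by linarith [hm₀.1] : (0:ℝ) ≤ (1+m₀)/2) (by linarith [hm₀.2] : (0:ℝ) ≤ (1-m₀)/2)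
      (by ring)
      (by rw [show {p : (ℤ → ℤ) × (ℤ → ℤ) | p.1 i = 1} = {p | p.1 i = 1} from rfl, hmx i 1]; rfl)
      (by rw [hmx i 0]; rfl)
    exact h.2
  have hy : μ {p : (ℤ → ℤ) × (ℤ → ℤ) | ¬ (p.2 i = 0 ∨ p.2 i = 1)} = 0 := by
    have hsub : {p : (ℤ → ℤ) × (ℤ → ℤ) | ¬ (p.2 i = 0 ∨ p.2 i = 1)}
        ⊆ ({p | p.2 i = 1} ∪ {p | p.2 i = 0})ᶜ := by
      intro p hp
      simp only [Set.mem_setOf_eq, not_or] at hp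
      simp only [Set.mem_compl_iff, Set.mem_union, Set.mem_setOf_eq, not_or]
      exact ⟨hp.2, hp.1⟩
    apply measure_mono_null hsub
    have h := marg_gen (μ := μ) (X := fun p : (ℤ → ℤ) × (ℤ → ℤ) => p.2 i)
      measurable_snd.eval hm₁.1 (by linarith [hm₁.2] : (0:ℝ) ≤ 1 - m₁) (by ring)
      (by rw [hmy i 1]; rfl) (by rw [hmy i 0]; rfl)
    exact h.2
  have : {p : (ℤ → ℤ) × (ℤ → ℤ) |
      ¬ ((p.1 i = 0 ∨ p.1 i = 1) ∧ (p.2 i = 0 ∨ p.2 i = 1))}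
      ⊆ {p : (ℤ → ℤ) × (ℤ → ℤ) | ¬ (p.1 i = 0 ∨ p.1 i = 1)}
        ∪ {p : (ℤ → ℤ) × (ℤ → ℤ) | ¬ (p.2 i = 0 ∨ p.2 i = 1)} := by
    intro p hp
    simp only [Set.mem_setOf_eq, not_and_or] at hp
    exact hp
  exact measure_mono_null this (measure_union_null hx hy)
end Meas3
end KacAux3

noncomputable section KacAux4
open MeasureTheory ProbabilityTheory Filter Finset

section Meas4
variable {μ : Measure ((ℤ → ℤ) × (ℤ → ℤ))} [IsProbabilityMeasure μ] {m₀ m₁ : ℝ}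

lemma integrable_Z (hae : ∀ᵐ p ∂μ, ∀ i : ℤ, (p.1 i = 0 ∨ p.1 i = 1) ∧ (p.2 i = 0 ∨ p.2 i = 1))
    (t : ℕ) (i : ℤ) : Integrable (Zfun t i) μ := by
  refine Integrable.mono' (integrable_const 1) (Zfun_measurable t i).aestronglyMeasurable ?_
  filter_upwards [hae] with p hp
  unfold Zfun
  rw [Real.norm_eq_abs, abs_mul]
  have h1 : |2 * (p.1 (i - (t:ℤ)) : ℝ) - 1| ≤ 1 := by
    rcases (hp (i - (t:ℤ))).1 with h | h <;> rw [h] <;> norm_num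
  have h2 : |∏ j ∈ Finset.Ico (i - (t:ℤ)) i, (1 - 2*(p.2 j : ℝ))| ≤ 1 := by
    rw [Finset.abs_prod]
    apply Finset.prod_le_one (fun j _ => abs_nonneg _)
    intro j _
    rcases (hp j).2 with h | h <;> rw [h] <;> norm_num
  exact mul_le_one₀ h1 (abs_nonneg _) h2

lemma integrable_Y (hae : ∀ᵐ p ∂μ, ∀ i : ℤ, (p.1 i = 0 ∨ p.1 i = 1) ∧ (p.2 i = 0 ∨ p.2 i = 1))
    (z : ℤ) : Integrable (Yfun z) μ := by
  refine Integrable.mono' (integrable_const 1) (Yfun_measurable z).aestronglyMeasurable ?_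
  filter_upwards [hae] with p hp
  rcases (hp z).2 with h | h <;> · unfold Yfun; rw [h]; norm_num

lemma integrable_X (hae : ∀ᵐ p ∂μ, ∀ i : ℤ, (p.1 i = 0 ∨ p.1 i = 1) ∧ (p.2 i = 0 ∨ p.2 i = 1))
    (z : ℤ) : Integrable (fun p : (ℤ → ℤ) × (ℤ → ℤ) => (p.1 z : ℝ)) μ := by
  refine Integrable.mono' (integrable_const 1)
    ((Measurable.of_discrete (f := fun x : ℤ => (x:ℝ))).comp
      measurable_fst.eval).aestronglyMeasurable ?_
  filter_upwards [hae] with p hp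
  rcases (hp z).1 with h | h <;> · rw [h]; norm_num

lemma integral_Yfun (hae : ∀ᵐ p ∂μ, ∀ i : ℤ, (p.1 i = 0 ∨ p.1 i = 1) ∧ (p.2 i = 0 ∨ p.2 i = 1))
    (hm₁ : m₁ ∈ Set.Icc (0:ℝ) 1)
    (hmy : ∀ i a : ℤ, μ {p | p.2 i = a} = nuY m₁ a)
    (z : ℤ) : ∫ p, Yfun z p ∂μ = m₁ := by
  have hind_eq : Yfun z =ᵐ[μ] Set.indicator {p | p.2 z = 1} (fun _ => (1:ℝ)) := by
    filter_upwards [hae] with p hp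
    rcases (hp z).2 with h | h
    · rw [Set.indicator_of_notMem (by simp [Set.mem_setOf_eq, h] : p ∉ {p | p.2 z = 1})]
      unfold Yfun; rw [h]; norm_num
    · rw [Set.indicator_of_mem (by simp [Set.mem_setOf_eq, h] : p ∈ {p | p.2 z = 1})]
      unfold Yfun; rw [h]; norm_num
  have hms : MeasurableSet {p : (ℤ → ℤ) × (ℤ → ℤ) | p.2 z = 1} := by
    rw [show {p : (ℤ → ℤ) × (ℤ → ℤ) | p.2 z = 1}
      = (fun p : (ℤ → ℤ) × (ℤ → ℤ) => p.2 z) ⁻¹' {1} from rfl]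
    exact ((measurable_pi_apply z).comp measurable_snd) (MeasurableSet.singleton (1:ℤ))
  rw [integral_congr_ae hind_eq, integral_indicator_const (1:ℝ) hms]
  rw [measureReal_def, hmy z 1]
  simp [nuY, ENNReal.toReal_ofReal hm₁.1]

lemma integral_Xfun (hae : ∀ᵐ p ∂μ, ∀ i : ℤ, (p.1 i = 0 ∨ p.1 i = 1) ∧ (p.2 i = 0 ∨ p.2 i = 1))
    (hm₀ : m₀ ∈ Set.Icc (-1:ℝ) 1)
    (hmx : ∀ i a : ℤ, μ {p | p.1 i = a} = nuX m₀ a)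
    (z : ℤ) : ∫ p, (p.1 z : ℝ) ∂μ = (1 + m₀)/2 := by
  have hind_eq : (fun p : (ℤ → ℤ) × (ℤ → ℤ) => (p.1 z : ℝ))
      =ᵐ[μ] Set.indicator {p | p.1 z = 1} (fun _ => (1:ℝ)) := by
    filter_upwards [hae] with p hp
    rcases (hp z).1 with h | h
    · rw [Set.indicator_of_notMem (by simp [Set.mem_setOf_eq, h] : p ∉ {p | p.1 z = 1})]
      rw [h]; norm_num
    · rw [Set.indicator_of_mem (by simp [Set.mem_setOf_eq, h] : p ∈ {p | p.1 z = 1})]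
      rw [h]; norm_num
  have hms : MeasurableSet {p : (ℤ → ℤ) × (ℤ → ℤ) | p.1 z = 1} := by
    rw [show {p : (ℤ → ℤ) × (ℤ → ℤ) | p.1 z = 1}
      = (fun p : (ℤ → ℤ) × (ℤ → ℤ) => p.1 z) ⁻¹' {1} from rfl]
    exact ((measurable_pi_apply z).comp measurable_fst) (MeasurableSet.singleton (1:ℤ))
  rw [integral_congr_ae hind_eq, integral_indicator_const (1:ℝ) hms]
  rw [measureReal_def, hmx z 1]
  simp [nuX, ENNReal.toReal_ofReal (by linarith [hm₀.1] : (0:ℝ) ≤ (1+m₀)/2)]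

lemma Zfun_step (t : ℕ) :
    Zfun (t+1) 0 = fun p => Zfun t (-1) p * (1 - 2 * Yfun (-1) p) := by
  funext p
  unfold Zfun Yfun
  have hc : (0:ℤ) - ((t+1 : ℕ):ℤ) = -1 - (t:ℤ) := by push_cast; ring
  have hIco : Finset.Ico ((0:ℤ) - ((t+1 : ℕ):ℤ)) 0
      = insert (-1) (Finset.Ico ((-1:ℤ) - (t:ℤ)) (-1)) := by
    ext x
    simp only [Finset.mem_Ico, Finset.mem_insert]
    push_cast
    omega
  rw [hIco, Finset.prod_insert (by simp), hc]
  ring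

lemma integral_Z
    (hind : iIndepFun (m := fun _ : ℤ ⊕ ℤ => (inferInstance : MeasurableSpace ℤ)) coordFun μ)
    (hmx : ∀ i a : ℤ, μ {p | p.1 i = a} = nuX m₀ a)
    (hmy : ∀ i a : ℤ, μ {p | p.2 i = a} = nuY m₁ a)
    (hae : ∀ᵐ p ∂μ, ∀ i : ℤ, (p.1 i = 0 ∨ p.1 i = 1) ∧ (p.2 i = 0 ∨ p.2 i = 1))
    (hm₀ : m₀ ∈ Set.Icc (-1:ℝ) 1) (hm₁ : m₁ ∈ Set.Icc (0:ℝ) 1)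
    (t : ℕ) : ∫ p, Zfun t 0 p ∂μ = m₀ * (1 - 2*m₁)^t := by
  induction t with
  | zero =>
    have h0 : Zfun 0 0 = fun p : (ℤ → ℤ) × (ℤ → ℤ) => 2 * (p.1 0 : ℝ) - 1 := by
      funext p
      unfold Zfun
      norm_num
    rw [h0]
    rw [integral_sub ((integrable_X hae 0).const_mul 2) (integrable_const 1),
      integral_const_mul, integral_const, integral_Xfun hae hm₀ hmx 0]
    simp [measure_univ]
    ring
  | succ t ih =>
    rw [Zfun_step t]
    have hint1 : Integrable (Zfun t (-1)) μ := integrable_Z hae t (-1)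
    have hτ : Integrable (fun p => 1 - 2 * Yfun (-1) p) μ :=
      (integrable_const 1).sub ((integrable_Y hae (-1)).const_mul 2)
    have hindep : IndepFun (Zfun t (-1)) (fun p => 1 - 2 * Yfun (-1) p) μ := by
      have := (indep_Z_Y hind t (le_refl (-1:ℤ))).comp (measurable_id (α := ℝ))
        ((measurable_const (a := (1:ℝ))).sub (measurable_id.const_mul 2))
      exact this
    have hmul := hindep.integral_mul_eq_mul_integral hint1.aestronglyMeasurable hτ.aestronglyMeasurable
    rw [show (fun p => Zfun t (-1) p * (1 - 2 * Yfun (-1) p))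
      = Zfun t (-1) * (fun p => 1 - 2 * Yfun (-1) p) from rfl, hmul]
    rw [(ident_Z hind hmx hmy t (-1)).integral_eq, ih]
    rw [integral_sub (integrable_const 1) ((integrable_Y hae (-1)).const_mul 2),
      integral_const_mul, integral_const, integral_Yfun hae hm₁ hmy (-1)]
    simp [measure_univ]
    ring
end Meas4
end KacAux4


/-- strong law of large numbers for the Kac chain: for the i.i.d. product
Bernoulli measure with spin mean `m₀` and scatterer density `m₁`, almost every microstate
follows the macroscopic law `Φ` up to any time horizon `T`. -/
theorem kac_strong_lln (m₀ m₁ : ℝ) (hm₀ : m₀ ∈ Set.Icc (-1 : ℝ) 1)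
    (hm₁ : m₁ ∈ Set.Icc (0 : ℝ) 1)
    (μ : Measure ((ℤ → ℤ) × (ℤ → ℤ))) [IsProbabilityMeasure μ]
    (hind : iIndepFun (m := fun _ : ℤ ⊕ ℤ => (inferInstance : MeasurableSpace ℤ)) coordFun μ)
    (hx1 : ∀ i : ℤ, μ {p | p.1 i = 1} = ENNReal.ofReal ((1 + m₀) / 2))
    (hx0 : ∀ i : ℤ, μ {p | p.1 i = 0} = ENNReal.ofReal ((1 - m₀) / 2))
    (hy1 : ∀ i : ℤ, μ {p | p.2 i = 1} = ENNReal.ofReal m₁)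
    (hy0 : ∀ i : ℤ, μ {p | p.2 i = 0} = ENNReal.ofReal (1 - m₁))
    (T : ℕ) :
    ∀ᵐ p ∂μ, ∀ t ≤ T,
      Tendsto (fun N : ℕ => m0Avg N (kacPhi^[t] p)) atTop (nhds (PhiMap^[t] (m₀, m₁)).1) ∧
      Tendsto (fun N : ℕ => m1Avg N (kacPhi^[t] p)) atTop (nhds (PhiMap^[t] (m₀, m₁)).2) := by
  have hmx : ∀ i a : ℤ, μ {p | p.1 i = a} = nuX m₀ a := marg_x hm₀ hx1 hx0
  have hmy : ∀ i a : ℤ, μ {p | p.2 i = a} = nuY m₁ a := marg_y hm₁ hy1 hy0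
  have hae := ae_coords01 hmx hmy hm₀ hm₁
  -- the scatterer density part
  have hY : ∀ᵐ p ∂μ, Tendsto
      (fun N : ℕ => (∑ i ∈ Finset.Icc (-(N:ℤ)) (N:ℤ), Yfun i p) / (2*(N:ℝ)+1))
      atTop (nhds m₁) := by
    have := slln_stationary μ 1 one_pos Yfun (integrable_Y hae)
      (fun i j h => indep_Y hind (by intro heq; subst heq; norm_num at h))
      (ident_Y hmy)
    rwa [integral_Yfun hae hm₁ hmy 0] at this
  -- the magnetization part
  have hZ : ∀ t : ℕ, ∀ᵐ p ∂μ, Tendsto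
      (fun N : ℕ => (∑ i ∈ Finset.Icc (-(N:ℤ)) (N:ℤ), Zfun t i p) / (2*(N:ℝ)+1))
      atTop (nhds (m₀ * (1 - 2*m₁)^t)) := by
    intro t
    have := slln_stationary μ (t+1) (Nat.succ_pos t) (Zfun t) (integrable_Z hae t)
      (fun i j h => indep_Z hind t (by push_cast at h; exact h))
      (ident_Z hind hmx hmy t)
    rwa [integral_Z hind hmx hmy hae hm₀ hm₁ t] at this
  filter_upwards [hY, ae_all_iff.2 hZ] with p h1 h2
  intro t _
  rw [PhiMap_iterate m₀ m₁ t]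
  constructor
  · apply (h2 t).congr
    intro N
    unfold m0Avg
    congr 1
    exact Finset.sum_congr rfl fun i _ => (kacPhi_formula t i p).symm
  · have hrw : (fun N : ℕ => m1Avg N (kacPhi^[t] p)) = fun N : ℕ => m1Avg N p := by
      funext N
      unfold m1Avg
      rw [kacPhi_iterate_snd]
    rw [hrw]
    exact h1
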